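/- Let n, v, r be natural numbers with 1 ≤ v < n and r ≥ 1, and set v!·S_v = n·(n−1)·⋯·(n−v+1) · (1 − v/n)^r (i.e., the descending factorial (n)_v times (1 − v/n)^r, where S_v = C(n, v)·(1 − v/n)^r). Then the double inequality n^v · exp(−v·(v + r)/(n − v)) < v!·S_v < n^v · exp(−r·v/n) holds in the real numbers. -/

import Mathlib

lemma aux_pow_lt_desc (n v : ℕ) (h1 : 1 ≤ v) (h2 : v < n) :
    (n - v) ^ v < n.descFactorial v := by
  rcases Nat.lt_or_ge v 2 with h | h
  · interval_cases v
    simp [Nat.descFactorial]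
    omega
  · calc (n - v) ^ v ≤ (n + 1 - v) ^ v := Nat.pow_le_pow_left (by omega) _
    _ < n.descFactorial v := Nat.pow_sub_lt_descFactorial h h2.le

/-- The double inequality of Section 1.4: for `1 ≤ v < n` and `r ≥ 1`, with
`v!·S_v = (n)_v · (1 − v/n)^r` (descending factorial times `(1 − v/n)^r`),
`n^v · exp(−v(v + r)/(n − v)) < v!·S_v < n^v · exp(−r·v/n)`. -/
theorem stmt_15 (n v r : ℕ) (hv : 1 ≤ v) (hvn : v < n) (hr : 1 ≤ r) :
    (n : ℝ) ^ v * Real.exp (-((v : ℝ) * ((v : ℝ) + (r : ℝ))) / ((n : ℝ) - (v : ℝ))) <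
        (Nat.descFactorial n v : ℝ) * (1 - (v : ℝ) / (n : ℝ)) ^ r ∧
      (Nat.descFactorial n v : ℝ) * (1 - (v : ℝ) / (n : ℝ)) ^ r <
        (n : ℝ) ^ v * Real.exp (-((r : ℝ) * (v : ℝ)) / (n : ℝ)) := by
  have hN : (0 : ℝ) < n := by exact_mod_cast Nat.zero_lt_of_lt hvn
  have hV : (0 : ℝ) < v := by exact_mod_cast hv
  have hVN : (v : ℝ) < n := by exact_mod_cast hvn
  have hNV : (0 : ℝ) < (n : ℝ) - v := by linarith
  have ht1 : (0 : ℝ) < 1 - (v : ℝ) / n := by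
    rw [sub_pos, div_lt_one hN]; exact hVN
  constructor
  · -- lower bound
    have h1 : Real.exp (-((v : ℝ) / ((n : ℝ) - v))) < 1 - (v : ℝ) / n := by
      have key : 1 / (1 - (v : ℝ) / n) < Real.exp ((v : ℝ) / ((n : ℝ) - v)) := by
        have h2 : (v : ℝ) / ((n : ℝ) - v) ≠ 0 := by positivity
        have := Real.add_one_lt_exp h2
        have heq : (v : ℝ) / ((n : ℝ) - v) + 1 = 1 / (1 - (v : ℝ) / n) := by
          field_simp
          ring
        linarith [heq ▸ this]
      rw [Real.exp_neg]
      rw [inv_lt_comm₀ (Real.exp_pos _) ht1]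
      rw [← one_div]
      · exact key
    have hexp : Real.exp (-((v : ℝ) * ((v : ℝ) + (r : ℝ))) / ((n : ℝ) - (v : ℝ)))
        = Real.exp (-((v : ℝ) / ((n : ℝ) - v))) ^ (v + r) := by
      have heq : -((v : ℝ) * ((v : ℝ) + (r : ℝ))) / ((n : ℝ) - (v : ℝ))
          = ((v + r : ℕ) : ℝ) * (-((v : ℝ) / ((n : ℝ) - v))) := by
        push_cast
        ring
      rw [heq, Real.exp_nat_mul]
    have hpow : Real.exp (-((v : ℝ) / ((n : ℝ) - v))) ^ (v + r) < (1 - (v : ℝ) / n) ^ (v + r) :=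
      pow_lt_pow_left₀ h1 (Real.exp_pos _).le (by omega)
    have hdesc : ((n : ℝ) - v) ^ v < (Nat.descFactorial n v : ℝ) := by
      have := aux_pow_lt_desc n v hv hvn
      have hc : (((n - v : ℕ)) : ℝ) = (n : ℝ) - v := by
        push_cast [Nat.cast_sub hvn.le]; ring
      calc ((n : ℝ) - v) ^ v = ((n - v : ℕ) : ℝ) ^ v := by rw [hc]
        _ < (Nat.descFactorial n v : ℝ) := by exact_mod_cast this
    calc (n : ℝ) ^ v * Real.exp (-((v : ℝ) * ((v : ℝ) + (r : ℝ))) / ((n : ℝ) - (v : ℝ)))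
        < (n : ℝ) ^ v * (1 - (v : ℝ) / n) ^ (v + r) := by
          rw [hexp]; exact mul_lt_mul_of_pos_left hpow (by positivity)
      _ = ((n : ℝ) * (1 - (v : ℝ) / n)) ^ v * (1 - (v : ℝ) / n) ^ r := by
          rw [mul_pow, pow_add]; ring
      _ = ((n : ℝ) - v) ^ v * (1 - (v : ℝ) / n) ^ r := by
          congr 2
          field_simp
      _ < (Nat.descFactorial n v : ℝ) * (1 - (v : ℝ) / n) ^ r :=
          mul_lt_mul_of_pos_right hdesc (by positivity)
  · -- upper bound
    have h1 : 1 - (v : ℝ) / n < Real.exp (-((v : ℝ) / n)) := by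
      have h2 : -((v : ℝ) / n) ≠ 0 := by
        have : (0:ℝ) < (v:ℝ)/n := by positivity
        linarith
      have := Real.add_one_lt_exp h2
      linarith
    have hexp : Real.exp (-((r : ℝ) * (v : ℝ)) / (n : ℝ))
        = Real.exp (-((v : ℝ) / n)) ^ r := by
      rw [← Real.exp_nat_mul]
      congr 1
      field_simp
    have hpow : (1 - (v : ℝ) / n) ^ r < Real.exp (-((v : ℝ) / n)) ^ r :=
      pow_lt_pow_left₀ h1 ht1.le (by omega)
    have hdesc : (Nat.descFactorial n v : ℝ) ≤ (n : ℝ) ^ v := by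
      exact_mod_cast Nat.descFactorial_le_pow n v
    calc (Nat.descFactorial n v : ℝ) * (1 - (v : ℝ) / n) ^ r
        ≤ (n : ℝ) ^ v * (1 - (v : ℝ) / n) ^ r :=
          mul_le_mul_of_nonneg_right hdesc (by positivity)
      _ < (n : ℝ) ^ v * Real.exp (-((r : ℝ) * (v : ℝ)) / (n : ℝ)) := by
          rw [hexp]; exact mul_lt_mul_of_pos_left hpow (by positivity)
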